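/- Let S be a real symmetric positive definite n×n matrix, let d_1,…,d_k ∈ ℝ^n be orthonormal vectors, let v_1,…,v_k > 0, and set Σ = I_n + Σ_{i=1}^k (v_i − 1) d_i d_iᵀ. Then D'(Σ) = Σ_{i=1}^k [ log(v_i) + (1/v_i − 1) d_iᵀ S d_i ] + tr(S). -/

import Mathlib

open Matrix

noncomputable def Dp {n : ℕ} (S A : Matrix (Fin n) (Fin n) ℝ) : ℝ :=
  Real.log A.det + (S * A⁻¹).trace

lemma vecMulVec_mul_vecMulVec' {n : ℕ} (a b c e : Fin n → ℝ) :
    vecMulVec a b * vecMulVec c e = (b ⬝ᵥ c) • vecMulVec a e := by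
  ext i j
  simp only [mul_apply, vecMulVec_apply, Matrix.smul_apply, smul_eq_mul, dotProduct,
    Finset.sum_mul]
  apply Finset.sum_congr rfl
  intro x _; ring

lemma mul_vecMulVec' {n : ℕ} (S : Matrix (Fin n) (Fin n) ℝ) (a b : Fin n → ℝ) :
    S * vecMulVec a b = vecMulVec (S *ᵥ a) b := by
  ext i j
  simp only [mul_apply, vecMulVec_apply, mulVec, dotProduct, Finset.sum_mul]
  apply Finset.sum_congr rfl
  intro x _; ring

lemma trace_vecMulVec' {n : ℕ} (a b : Fin n → ℝ) :
    (vecMulVec a b).trace = a ⬝ᵥ b := by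
  simp [trace, dotProduct, vecMulVec_apply, diag]

lemma det_one_add_smul_vecMulVec {n : ℕ} (c : ℝ) (u : Fin n → ℝ) :
    ((1 : Matrix (Fin n) (Fin n) ℝ) + c • vecMulVec u u).det = 1 + c * (u ⬝ᵥ u) := by
  have h : c • vecMulVec u u = replicateCol Unit (c • u) * replicateRow Unit u := by
    rw [← vecMulVec_eq]
    ext a b
    simp [vecMulVec_apply, Matrix.smul_apply]; ring
  rw [h, det_one_add_replicateCol_mul_replicateRow]
  simp [dotProduct, Finset.mul_sum]
  apply Finset.sum_congr rfl
  intro x _; ring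

lemma det_one_add_sum {n k : ℕ} (d : Fin k → Fin n → ℝ)
    (horth : ∀ i j, d i ⬝ᵥ d j = if i = j then (1 : ℝ) else 0)
    (c : Fin k → ℝ) (s : Finset (Fin k)) :
    ((1 : Matrix (Fin n) (Fin n) ℝ) + ∑ i ∈ s, c i • vecMulVec (d i) (d i)).det =
      ∏ i ∈ s, (1 + c i) := by
  induction s using Finset.induction_on with
  | empty => simp
  | @insert a s ha ih =>
    rw [Finset.sum_insert ha, Finset.prod_insert ha]
    have key : (1 : Matrix (Fin n) (Fin n) ℝ) + (c a • vecMulVec (d a) (d a)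
          + ∑ i ∈ s, c i • vecMulVec (d i) (d i))
        = (1 + c a • vecMulVec (d a) (d a))
          * (1 + ∑ i ∈ s, c i • vecMulVec (d i) (d i)) := by
      rw [add_mul, one_mul, mul_add, mul_one, smul_mul_assoc, Finset.mul_sum]
      have hz : ∑ i ∈ s, vecMulVec (d a) (d a) * (c i • vecMulVec (d i) (d i)) = 0 := by
        apply Finset.sum_eq_zero
        intro i hi
        rw [Matrix.mul_smul, vecMulVec_mul_vecMulVec', horth a i,
          if_neg (by rintro rfl; exact ha hi)]
        simp
      rw [hz]
      simp only [smul_zero, add_zero]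
      abel
    rw [key, det_mul, ih, det_one_add_smul_vecMulVec, horth a a, if_pos rfl, mul_one]

theorem stmt_9 {n k : ℕ} (S : Matrix (Fin n) (Fin n) ℝ) (hS : S.PosDef)
    (d : Fin k → Fin n → ℝ)
    (horth : ∀ i j, d i ⬝ᵥ d j = if i = j then (1 : ℝ) else 0)
    (v : Fin k → ℝ) (hv : ∀ i, 0 < v i) :
    Dp S (1 + ∑ i, (v i - 1) • Matrix.vecMulVec (d i) (d i)) =
      (∑ i, (Real.log (v i) + ((v i)⁻¹ - 1) * (d i ⬝ᵥ S *ᵥ d i))) + S.trace := by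
  set E : Fin k → Matrix (Fin n) (Fin n) ℝ := fun i => vecMulVec (d i) (d i) with hE
  set A : Matrix (Fin n) (Fin n) ℝ := 1 + ∑ i, (v i - 1) • E i with hA
  set B : Matrix (Fin n) (Fin n) ℝ := 1 + ∑ i, ((v i)⁻¹ - 1) • E i with hB
  have hEE : ∀ i j, E i * E j = if i = j then E i else 0 := by
    intro i j
    rw [hE, vecMulVec_mul_vecMulVec', horth i j]
    split <;> simp_all
  have hAB : A * B = 1 := by
    rw [hA, hB, add_mul, one_mul, mul_add, mul_one, Finset.sum_mul_sum]
    have h1 : ∑ i, ∑ j, ((v i - 1) • E i) * (((v j)⁻¹ - 1) • E j)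
        = ∑ i, ((v i - 1) * ((v i)⁻¹ - 1)) • E i := by
      apply Finset.sum_congr rfl
      intro i _
      rw [Finset.sum_eq_single i]
      · rw [smul_mul_assoc, Matrix.mul_smul, hEE i i, if_pos rfl, smul_smul]
      · intro j _ hji
        rw [smul_mul_assoc, Matrix.mul_smul, hEE i j, if_neg (Ne.symm hji)]
        simp
      · intro h; exact absurd (Finset.mem_univ i) h
    rw [h1]
    have h2 : ∑ i, ((v i)⁻¹ - 1) • E i + (∑ i, ((v i - 1) • E i)
        + ∑ i, ((v i - 1) * ((v i)⁻¹ - 1)) • E i) = 0 := by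
      rw [← Finset.sum_add_distrib, ← Finset.sum_add_distrib]
      apply Finset.sum_eq_zero
      intro i _
      rw [← add_smul, ← add_smul]
      have hvne : v i ≠ 0 := (hv i).ne'
      have hc : (v i)⁻¹ - 1 + (v i - 1 + (v i - 1) * ((v i)⁻¹ - 1)) = 0 := by
        field_simp; ring
      rw [hc, zero_smul]
    calc 1 + ∑ i, ((v i)⁻¹ - 1) • E i + (∑ i, ((v i - 1) • E i)
          + ∑ i, ((v i - 1) * ((v i)⁻¹ - 1)) • E i)
        = 1 + (∑ i, ((v i)⁻¹ - 1) • E i + (∑ i, ((v i - 1) • E i)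
          + ∑ i, ((v i - 1) * ((v i)⁻¹ - 1)) • E i)) := by abel
      _ = 1 := by rw [h2, add_zero]
  have hInv : A⁻¹ = B := inv_eq_right_inv hAB
  have hdet : A.det = ∏ i, v i := by
    rw [hA, det_one_add_sum d horth]
    apply Finset.prod_congr rfl
    intro i _; ring
  have hlog : Real.log A.det = ∑ i, Real.log (v i) := by
    rw [hdet, Real.log_prod]
    intro i _; exact (hv i).ne'
  have htr : (S * B).trace = (∑ i, ((v i)⁻¹ - 1) * (d i ⬝ᵥ S *ᵥ d i)) + S.trace := by
    rw [hB, mul_add, mul_one, Finset.mul_sum, trace_add, trace_sum]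
    have h3 : ∀ i ∈ Finset.univ, (S * ((v i)⁻¹ - 1) • E i).trace
        = ((v i)⁻¹ - 1) * (d i ⬝ᵥ S *ᵥ d i) := by
      intro i _
      rw [Matrix.mul_smul, trace_smul, hE, mul_vecMulVec', trace_vecMulVec',
        dotProduct_comm]
      simp
    rw [Finset.sum_congr rfl h3, add_comm]
  rw [Dp, hInv, hlog, htr, ← add_assoc, ← Finset.sum_add_distrib]
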